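/- Let K be a finite field with |K| = q, let W be a finite-dimensional K-vector space, and let (U,V) be a nontrivial solution of the isometry equation with tuples of length m = q+1. Then for all i ≠ j in {1,…,m} and every k ∈ {1,…,m}, both V_k ⊆ V_i + V_j and U_k ⊆ V_i + V_j; moreover, for all i ≠ j, dim_K(V_i + V_j) ≤ 2 + max_{1≤k≤m} dim_K V_k. -/

import Mathlib

open Finset
open scoped Classical

/-- The pair of tuples `(U, V)` is a solution of the isometry equation
`∑ i, (1/|V i|) • 1_{V i} = ∑ i, (1/|U i|) • 1_{U i}` as real-valued functions on `W`. -/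
def IsometrySolution {K W : Type*} [Field K] [AddCommGroup W] [Module K W]
    {m : ℕ} (U V : Fin m → Submodule K W) : Prop :=
  ∀ w : W,
    ∑ i, ((Nat.card ↥(V i) : ℝ))⁻¹ * (if w ∈ V i then 1 else 0) =
    ∑ i, ((Nat.card ↥(U i) : ℝ))⁻¹ * (if w ∈ U i then 1 else 0)

/-- Two tuples of subspaces are equivalent if one is a permutation of the other. -/
def TuplesEquiv {K W : Type*} [Field K] [AddCommGroup W] [Module K W]
    {m : ℕ} (U V : Fin m → Submodule K W) : Prop :=
  ∃ π : Equiv.Perm (Fin m), ∀ i, V i = U (π i)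

open Module

set_option linter.unusedSectionVars false
set_option maxHeartbeats 1600000

section Comb
variable {K : Type*} [Field K] [Fintype K] {E : Type*} [AddCommGroup E] [Module K E]
  [FiniteDimensional K E] [Fintype E]

lemma card_filter_mem (S : Submodule K E) :
    ((univ : Finset E).filter (· ∈ S)).card = Nat.card S := by
  rw [Nat.card_eq_fintype_card]
  classical
  rw [Fintype.card_subtype]

lemma card_submodule (S : Submodule K E) :
    Nat.card S = Fintype.card K ^ finrank K S := by
  rw [Nat.card_eq_fintype_card]
  exact card_eq_pow_finrank

lemma two_le_q : 2 ≤ Fintype.card K := Fintype.one_lt_card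

/-- A nonzero space cannot be covered by at most `q` proper subspaces. -/
lemma covering (X : Submodule K E) (T : Multiset (Submodule K E))
    (hlt : ∀ p ∈ T, ¬ X ≤ p) (hcov : ∀ x ∈ X, ∃ p ∈ T, x ∈ p) :
    Fintype.card K + 1 ≤ Multiset.card T := by
  by_contra hcon
  push_neg at hcon
  have hq2 : 2 ≤ Fintype.card K := two_le_q
  by_cases hXbot : X = ⊥
  · obtain ⟨p, hpT, _⟩ := hcov 0 (zero_mem X)
    exact hlt p hpT (hXbot ▸ bot_le)
  · have hd1 : 1 ≤ finrank K X := by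
      by_contra hd
      push_neg at hd
      exact hXbot (Submodule.finrank_eq_zero.mp (by omega))
    set d := finrank K X with hddef
    set F : Finset E := univ.filter (fun x => x ∈ X ∧ x ≠ 0) with hFdef
    have hFcard : F.card + 1 = Fintype.card K ^ d := by
      have h1 : (univ.filter (· ∈ X)) = insert (0:E) F := by
        ext x
        simp only [hFdef, mem_filter, mem_univ, true_and, mem_insert]
        constructor
        · intro hx
          by_cases h0 : x = 0
          · exact Or.inl h0
          · exact Or.inr ⟨hx, h0⟩
        · rintro (rfl | ⟨hx, _⟩)
          · exact zero_mem X
          · exact hx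
      have h0F : (0:E) ∉ F := by simp [hFdef]
      have := card_filter_mem (E := E) X
      rw [h1, Finset.card_insert_of_notMem h0F, card_submodule, ← hddef] at this
      omega
    have hsub : F ⊆ T.toFinset.biUnion (fun p => F.filter (· ∈ p)) := by
      intro x hx
      have hx' := hx
      simp only [hFdef, mem_filter, mem_univ, true_and] at hx'
      obtain ⟨p, hpT, hxp⟩ := hcov x hx'.1
      simp only [Finset.mem_biUnion]
      exact ⟨p, Multiset.mem_toFinset.mpr hpT, Finset.mem_filter.mpr ⟨hx, hxp⟩⟩
    have hpart : ∀ p ∈ T.toFinset, (F.filter (· ∈ p)).card + 1 ≤ Fintype.card K ^ (d - 1) := by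
      intro p hp
      have hpT := Multiset.mem_toFinset.mp hp
      have hlt' : X ⊓ p < X := by
        refine lt_of_le_of_ne inf_le_left ?_
        intro h
        exact hlt p hpT (by rw [← h]; exact inf_le_right)
      have hrk : finrank K (X ⊓ p : Submodule K E) < d :=
        Submodule.finrank_lt_finrank_of_lt hlt'
      have hsub2 : insert (0:E) (F.filter (· ∈ p)) ⊆ univ.filter (· ∈ (X ⊓ p : Submodule K E)) := by
        intro x hx
        simp only [mem_insert] at hx
        rcases hx with rfl | hx
        · simp only [mem_filter, mem_univ, true_and]
          exact zero_mem _
        · simp only [hFdef, mem_filter, mem_univ, true_and] at hx ⊢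
          exact ⟨hx.1.1, hx.2⟩
      have h0 : (0:E) ∉ F.filter (· ∈ p) := by simp [hFdef]
      have := Finset.card_le_card hsub2
      rw [Finset.card_insert_of_notMem h0, card_filter_mem, card_submodule] at this
      calc (F.filter (· ∈ p)).card + 1 ≤ Fintype.card K ^ finrank K (X ⊓ p : Submodule K E) := this
      _ ≤ Fintype.card K ^ (d - 1) := Nat.pow_le_pow_right (by omega) (by omega)
    have hchain : F.card ≤ Multiset.card T * (Fintype.card K ^ (d-1) - 1) := by
      calc F.card ≤ (T.toFinset.biUnion (fun p => F.filter (· ∈ p))).card :=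
            Finset.card_le_card hsub
      _ ≤ ∑ p ∈ T.toFinset, (F.filter (· ∈ p)).card := Finset.card_biUnion_le
      _ ≤ T.toFinset.card * (Fintype.card K ^ (d-1) - 1) := by
            apply Finset.sum_le_card_nsmul
            intro p hp
            have := hpart p hp
            omega
      _ ≤ Multiset.card T * (Fintype.card K ^ (d-1) - 1) :=
            Nat.mul_le_mul_right _ T.toFinset_card_le
    have hTq : Multiset.card T * (Fintype.card K ^ (d-1) - 1)
        ≤ Fintype.card K * (Fintype.card K ^ (d-1) - 1) :=
      Nat.mul_le_mul_right _ (by omega)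
    have hpow : Fintype.card K * Fintype.card K ^ (d - 1) = Fintype.card K ^ d := by
      rw [← pow_succ']
      congr 1
      omega
    have hp1 : 1 ≤ Fintype.card K ^ (d-1) := Nat.one_le_pow _ _ (by omega)
    have hexp : Fintype.card K * (Fintype.card K ^ (d-1) - 1)
        = Fintype.card K * Fintype.card K ^ (d-1) - Fintype.card K := by
      rw [Nat.mul_sub]
      omega
    have h1 : F.card ≤ Fintype.card K * (Fintype.card K ^ (d-1) - 1) := hchain.trans hTq
    rw [hexp, hpow] at h1
    have hqd : Fintype.card K ≤ Fintype.card K ^ d := Nat.le_self_pow (by omega) _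
    omega


end Comb

lemma exists_perm_of_multiset_eq {α : Type*} {m : ℕ} {f g : Fin m → α}
    (h : Multiset.map f Finset.univ.val = Multiset.map g Finset.univ.val) :
    ∃ π : Equiv.Perm (Fin m), ∀ i, f i = g (π i) := by
  have key : ∀ (a : α) (f' : Fin m → α), Fintype.card {i // f' i = a} =
      Multiset.card (Multiset.filter (fun i => a = f' i) univ.val) := by
    intro a f'
    rw [Fintype.card_subtype]
    have h1 : (univ.filter fun i => f' i = a) = (univ.filter fun i => a = f' i) :=
      Finset.filter_congr (fun i _ => eq_comm)
    rw [h1]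
    rfl
  have hcard : ∀ a, Fintype.card {i // f i = a} = Fintype.card {i // g i = a} := by
    intro a
    have hc := congrArg (Multiset.count a) h
    rw [Multiset.count_map, Multiset.count_map] at hc
    rw [key a f, key a g, hc]
  have e : ∀ a, {i // f i = a} ≃ {i // g i = a} :=
    fun a => Fintype.equivOfCardEq (hcard a)
  refine ⟨Equiv.ofFiberEquiv e, fun i => ?_⟩
  exact (Equiv.ofFiberEquiv_map e i).symm

section Main
variable {K : Type*} [Field K] [Fintype K] {E : Type*} [AddCommGroup E] [Module K E]
  [FiniteDimensional K E] [Fintype E]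

/-- Helper: a disjoint pair of multisets with equal counts and a maximal element in `S`
forces the other side to be long. -/
lemma no_disjoint (S T : Multiset (Submodule K E))
    (hcount : ∀ x : E, S.countP (x ∈ ·) = T.countP (x ∈ ·))
    (hdisj : ∀ p, p ∈ S → p ∉ T)
    (M : Submodule K E) (hMS : M ∈ S)
    (hmax : ∀ p ∈ S + T, finrank K p ≤ finrank K M)
    (hTle : Multiset.card T ≤ Fintype.card K) : False := by
  have h := covering (K := K) M T ?_ ?_
  · omega
  · intro p hpT hle
    have h1 : finrank K p ≤ finrank K M := hmax p (by simp [hpT])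
    have : M = p := Submodule.eq_of_le_of_finrank_le hle h1
    exact hdisj M hMS (this ▸ hpT)
  · intro x hx
    have h1 : 0 < S.countP (x ∈ ·) := Multiset.countP_pos.mpr ⟨M, hMS, hx⟩
    rw [hcount x] at h1
    exact Multiset.countP_pos.mp h1

/-- Any solution of the counting equation of length at most `q` is trivial. -/
lemma short_trivial : ∀ (n : ℕ) (S T : Multiset (Submodule K E)), Multiset.card S = n →
    Multiset.card S ≤ Fintype.card K →
    (∀ x : E, S.countP (x ∈ ·) = T.countP (x ∈ ·)) → S = T := by
  intro n
  induction n with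
  | zero =>
    intro S T hn _ hcount
    have hS : S = 0 := Multiset.card_eq_zero.mp hn
    subst hS
    have : Multiset.card T = 0 := by
      have h := hcount 0
      rw [Multiset.countP_eq_card.mpr (fun p _ => zero_mem p)] at h
      rw [Multiset.countP_eq_card.mpr (fun p _ => zero_mem p)] at h
      simpa using h.symm
    rw [Multiset.card_eq_zero.mp this]
  | succ n ih =>
    intro S T hn hle hcount
    have hTcard : Multiset.card T = Multiset.card S := by
      have h := hcount 0
      rw [Multiset.countP_eq_card.mpr (fun p _ => zero_mem p),
        Multiset.countP_eq_card.mpr (fun p _ => zero_mem p)] at h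
      exact h.symm
    by_cases hcom : ∃ p, p ∈ S ∧ p ∈ T
    · obtain ⟨p, hpS, hpT⟩ := hcom
      have hS : p ::ₘ S.erase p = S := Multiset.cons_erase hpS
      have hT : p ::ₘ T.erase p = T := Multiset.cons_erase hpT
      have hcount' : ∀ x : E, (S.erase p).countP (x ∈ ·) = (T.erase p).countP (x ∈ ·) := by
        intro x
        have h := hcount x
        rw [← hS, ← hT, Multiset.countP_cons, Multiset.countP_cons] at h
        omega
      have hcard : Multiset.card (S.erase p) = n := by
        rw [Multiset.card_erase_of_mem hpS, hn]
        rfl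
      have := ih (S.erase p) (T.erase p) hcard (by omega) hcount'
      rw [← hS, ← hT, this]
    · push_neg at hcom
      have hSne : S ≠ 0 := by
        intro h
        rw [h] at hn
        simp at hn
      obtain ⟨p0, hp0⟩ := Multiset.exists_mem_of_ne_zero hSne
      have hne : (S + T).toFinset.Nonempty := ⟨p0, by simp [hp0]⟩
      obtain ⟨M, hMmem, hmax⟩ := Finset.exists_max_image (S + T).toFinset
        (fun p => finrank K p) hne
      rw [Multiset.mem_toFinset, Multiset.mem_add] at hMmem
      have hmax' : ∀ p ∈ S + T, finrank K p ≤ finrank K M := by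
        intro p hp
        exact hmax p (Multiset.mem_toFinset.mpr hp)
      rcases hMmem with hMS | hMT
      · exact absurd (no_disjoint S T hcount hcom M hMS hmax' (by omega)) (by simp)
      · have hcount' : ∀ x : E, T.countP (x ∈ ·) = S.countP (x ∈ ·) :=
          fun x => (hcount x).symm
        have hdisj' : ∀ p, p ∈ T → p ∉ S := fun p hpT hpS => hcom p hpS hpT
        have hmax'' : ∀ p ∈ T + S, finrank K p ≤ finrank K M := by
          intro p hp
          rw [Multiset.mem_add] at hp
          exact hmax' p (Multiset.mem_add.mpr hp.symm)
        exact absurd (no_disjoint T S hcount' hdisj' M hMT hmax'' (by omega)) (by simp)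


lemma countP_map_finset {m : ℕ} (C : Fin m → Submodule K E) (s : Finset (Fin m)) (y : E) :
    Multiset.countP (y ∈ ·) (Multiset.map C s.val) = (s.filter fun i => y ∈ C i).card := by
  rw [Multiset.countP_map]
  rfl

lemma count_not_middle
    {A B : Fin (Fintype.card K + 1) → Submodule K E}
    (hc : ∀ x : E, (univ.filter fun i => x ∈ A i).card = (univ.filter fun i => x ∈ B i).card)
    (hMS : Multiset.map A univ.val ≠ Multiset.map B univ.val)
    (x : E) (h2 : 2 ≤ (univ.filter fun i => x ∈ A i).card) :
    (univ.filter fun i => x ∈ A i) = univ ∧ (univ.filter fun i => x ∈ B i) = univ := by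
  have hq2 : 2 ≤ Fintype.card K := Fintype.one_lt_card
  by_cases hbig : Fintype.card K + 1 ≤ (univ.filter fun i => x ∈ A i).card
  · have hAu : (univ.filter fun i => x ∈ A i) = univ := by
      apply Finset.eq_univ_of_card
      have h1 : (univ.filter fun i => x ∈ A i).card ≤ Fintype.card (Fin (Fintype.card K + 1)) :=
        Finset.card_le_univ _
      rw [Fintype.card_fin] at h1 ⊢
      omega
    have hBu : (univ.filter fun i => x ∈ B i) = univ := by
      apply Finset.eq_univ_of_card
      have h1 : (univ.filter fun i => x ∈ B i).card ≤ Fintype.card (Fin (Fintype.card K + 1)) :=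
        Finset.card_le_univ _
      rw [Fintype.card_fin] at h1 ⊢
      rw [← hc x] at h1 ⊢
      omega
    exact ⟨hAu, hBu⟩
  exfalso
  push_neg at hbig
  have hble : (univ.filter fun i => x ∈ A i).card ≤ Fintype.card K := by omega
  -- the per-y count identity between the subfamilies through x
  have hterm : ∀ (C : Fin (Fintype.card K + 1) → Submodule K E) (y : E) i, x ∉ C i →
      (univ.filter fun t : K => y + t • x ∈ C i).card ≤ 1 := by
    intro C y i hxC
    apply Finset.card_le_one.mpr
    intro t1 ht1 t2 ht2
    simp only [mem_filter, mem_univ, true_and] at ht1 ht2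
    by_contra hne
    apply hxC
    have hsub : (t1 - t2) • x ∈ C i := by
      have h3 := (C i).sub_mem ht1 ht2
      have h4 : y + t1 • x - (y + t2 • x) = (t1 - t2) • x := by
        rw [sub_smul]
        abel
      rwa [h4] at h3
    have h5 := (C i).smul_mem (t1 - t2)⁻¹ hsub
    rwa [smul_smul, inv_mul_cancel₀ (sub_ne_zero.mpr hne), one_smul] at h5
  have hside : ∀ (C : Fin (Fintype.card K + 1) → Submodule K E) (y : E),
      ∑ t : K, ((univ.filter fun i => y + t • x ∈ C i).card)
      = Fintype.card K * ((univ.filter fun i => x ∈ C i).filter fun i => y ∈ C i).card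
        + ∑ i ∈ univ.filter (fun i => ¬ x ∈ C i),
            (univ.filter fun t : K => y + t • x ∈ C i).card := by
    intro C y
    have h1 : ∀ i : Fin (Fintype.card K + 1), x ∈ C i →
        (univ.filter fun t : K => y + t • x ∈ C i).card
          = if y ∈ C i then Fintype.card K else 0 := by
      intro i hxi
      by_cases hy : y ∈ C i
      · rw [if_pos hy]
        have heq : (univ.filter fun t : K => y + t • x ∈ C i) = univ := by
          apply Finset.eq_univ_of_forall
          intro t
          simp only [mem_filter, mem_univ, true_and]
          exact (C i).add_mem hy ((C i).smul_mem t hxi)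
        rw [heq, Finset.card_univ]
      · rw [if_neg hy, Finset.card_eq_zero]
        rw [Finset.filter_eq_empty_iff]
        intro t _
        intro hmem
        apply hy
        have h3 := (C i).sub_mem hmem ((C i).smul_mem t hxi)
        rwa [add_sub_cancel_right] at h3
    calc ∑ t : K, ((univ.filter fun i => y + t • x ∈ C i).card)
        = ∑ t : K, ∑ i, (if y + t • x ∈ C i then 1 else 0) :=
          Finset.sum_congr rfl (fun t _ => Finset.card_filter _ _)
      _ = ∑ i, ∑ t : K, (if y + t • x ∈ C i then 1 else 0) := Finset.sum_comm
      _ = ∑ i, (univ.filter fun t : K => y + t • x ∈ C i).card :=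
          Finset.sum_congr rfl (fun i _ => (Finset.card_filter _ _).symm)
      _ = ∑ i ∈ univ.filter (fun i => x ∈ C i),
            (univ.filter fun t : K => y + t • x ∈ C i).card
          + ∑ i ∈ univ.filter (fun i => ¬ x ∈ C i),
            (univ.filter fun t : K => y + t • x ∈ C i).card :=
          (Finset.sum_filter_add_sum_filter_not _ _ _).symm
      _ = Fintype.card K * ((univ.filter fun i => x ∈ C i).filter fun i => y ∈ C i).card
          + ∑ i ∈ univ.filter (fun i => ¬ x ∈ C i),
            (univ.filter fun t : K => y + t • x ∈ C i).card := by
          congr 1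
          rw [Finset.sum_congr rfl (fun i hi => h1 i (Finset.mem_filter.mp hi).2)]
          rw [← Finset.sum_filter, Finset.sum_const, smul_eq_mul, mul_comm]
  have hcompl : ∀ (C : Fin (Fintype.card K + 1) → Submodule K E),
      (univ.filter fun i => ¬ x ∈ C i).card + (univ.filter fun i => x ∈ C i).card
        = Fintype.card K + 1 := by
    intro C
    have h3 := Finset.card_filter_add_card_filter_not
      (s := (univ : Finset (Fin (Fintype.card K + 1)))) (p := fun i => x ∈ C i)
    rw [Finset.card_univ, Fintype.card_fin] at h3
    omega
  have key : ∀ y : E,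
      ((univ.filter fun i => x ∈ A i).filter fun i => y ∈ A i).card
        = ((univ.filter fun i => x ∈ B i).filter fun i => y ∈ B i).card := by
    intro y
    have hsum : ∑ t : K, ((univ.filter fun i => y + t • x ∈ A i).card)
        = ∑ t : K, ((univ.filter fun i => y + t • x ∈ B i).card) :=
      Finset.sum_congr rfl (fun t _ => hc (y + t • x))
    rw [hside A y, hside B y] at hsum
    have hrA : ∑ i ∈ univ.filter (fun i => ¬ x ∈ A i),
        (univ.filter fun t : K => y + t • x ∈ A i).card ≤ Fintype.card K - 1 := by
      calc _ ≤ (univ.filter (fun i => ¬ x ∈ A i)).card * 1 := by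
            apply Finset.sum_le_card_nsmul
            intro i hi
            exact hterm A y i (Finset.mem_filter.mp hi).2
        _ ≤ Fintype.card K - 1 := by
            have := hcompl A
            omega
    have hrB : ∑ i ∈ univ.filter (fun i => ¬ x ∈ B i),
        (univ.filter fun t : K => y + t • x ∈ B i).card ≤ Fintype.card K - 1 := by
      calc _ ≤ (univ.filter (fun i => ¬ x ∈ B i)).card * 1 := by
            apply Finset.sum_le_card_nsmul
            intro i hi
            exact hterm B y i (Finset.mem_filter.mp hi).2
        _ ≤ Fintype.card K - 1 := by
            have h4 := hcompl B
            have h5 := hc x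
            omega
    have hq0 : 0 < Fintype.card K := by omega
    have hdivA : (Fintype.card K * ((univ.filter fun i => x ∈ A i).filter fun i => y ∈ A i).card
        + ∑ i ∈ univ.filter (fun i => ¬ x ∈ A i),
            (univ.filter fun t : K => y + t • x ∈ A i).card) / Fintype.card K
        = ((univ.filter fun i => x ∈ A i).filter fun i => y ∈ A i).card := by
      rw [Nat.mul_add_div hq0]
      have : (∑ i ∈ univ.filter (fun i => ¬ x ∈ A i),
          (univ.filter fun t : K => y + t • x ∈ A i).card) / Fintype.card K = 0 :=
        Nat.div_eq_of_lt (by omega)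
      omega
    have hdivB : (Fintype.card K * ((univ.filter fun i => x ∈ B i).filter fun i => y ∈ B i).card
        + ∑ i ∈ univ.filter (fun i => ¬ x ∈ B i),
            (univ.filter fun t : K => y + t • x ∈ B i).card) / Fintype.card K
        = ((univ.filter fun i => x ∈ B i).filter fun i => y ∈ B i).card := by
      rw [Nat.mul_add_div hq0]
      have : (∑ i ∈ univ.filter (fun i => ¬ x ∈ B i),
          (univ.filter fun t : K => y + t • x ∈ B i).card) / Fintype.card K = 0 :=
        Nat.div_eq_of_lt (by omega)
      omega
    rw [← hdivA, ← hdivB, hsum]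
  -- multiset equality of the subfamily through x
  have hMA : Multiset.map A (univ.filter fun i => x ∈ A i).val
      = Multiset.map B (univ.filter fun i => x ∈ B i).val := by
    apply short_trivial (Multiset.card (Multiset.map A (univ.filter fun i => x ∈ A i).val)) _ _ rfl
    · rw [Multiset.card_map]
      exact hble
    · intro y
      rw [countP_map_finset, countP_map_finset]
      exact key y
  -- complement subfamily
  have hsplitA : Multiset.map A univ.val
      = Multiset.map A (univ.filter fun i => x ∈ A i).val
        + Multiset.map A (univ.filter fun i => ¬ x ∈ A i).val := by
    rw [← Multiset.map_add]
    congr 1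
    rw [Finset.filter_val, Finset.filter_val]
    exact (Multiset.filter_add_not _ _).symm
  have hsplitB : Multiset.map B univ.val
      = Multiset.map B (univ.filter fun i => x ∈ B i).val
        + Multiset.map B (univ.filter fun i => ¬ x ∈ B i).val := by
    rw [← Multiset.map_add]
    congr 1
    rw [Finset.filter_val, Finset.filter_val]
    exact (Multiset.filter_add_not _ _).symm
  have hMC : Multiset.map A (univ.filter fun i => ¬ x ∈ A i).val
      = Multiset.map B (univ.filter fun i => ¬ x ∈ B i).val := by
    apply short_trivial (Multiset.card (Multiset.map A (univ.filter fun i => ¬ x ∈ A i).val)) _ _ rfl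
    · rw [Multiset.card_map]
      have h4 := hcompl A
      have : Multiset.card (univ.filter fun i => ¬ x ∈ A i).val
          = (univ.filter fun i => ¬ x ∈ A i).card := rfl
      omega
    · intro y
      rw [countP_map_finset, countP_map_finset]
      -- totals minus through-x parts
      have htotA : (univ.filter fun i => y ∈ A i).card
          = ((univ.filter fun i => x ∈ A i).filter fun i => y ∈ A i).card
            + ((univ.filter fun i => ¬ x ∈ A i).filter fun i => y ∈ A i).card := by
        rw [Finset.filter_filter, Finset.filter_filter]
        have h6 := Finset.card_filter_add_card_filter_not
          (s := univ.filter fun i => y ∈ A i) (p := fun i => x ∈ A i)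
        rw [Finset.filter_filter, Finset.filter_filter] at h6
        have e1 : (univ.filter fun i => y ∈ A i ∧ x ∈ A i)
            = (univ.filter fun i => x ∈ A i ∧ y ∈ A i) := by
          apply Finset.filter_congr
          intro i _
          exact and_comm
        have e2 : (univ.filter fun i => y ∈ A i ∧ ¬ x ∈ A i)
            = (univ.filter fun i => ¬ x ∈ A i ∧ y ∈ A i) := by
          apply Finset.filter_congr
          intro i _
          exact and_comm
        rw [e1, e2] at h6
        omega
      have htotB : (univ.filter fun i => y ∈ B i).card
          = ((univ.filter fun i => x ∈ B i).filter fun i => y ∈ B i).card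
            + ((univ.filter fun i => ¬ x ∈ B i).filter fun i => y ∈ B i).card := by
        rw [Finset.filter_filter, Finset.filter_filter]
        have h6 := Finset.card_filter_add_card_filter_not
          (s := univ.filter fun i => y ∈ B i) (p := fun i => x ∈ B i)
        rw [Finset.filter_filter, Finset.filter_filter] at h6
        have e1 : (univ.filter fun i => y ∈ B i ∧ x ∈ B i)
            = (univ.filter fun i => x ∈ B i ∧ y ∈ B i) := by
          apply Finset.filter_congr
          intro i _
          exact and_comm
        have e2 : (univ.filter fun i => y ∈ B i ∧ ¬ x ∈ B i)
            = (univ.filter fun i => ¬ x ∈ B i ∧ y ∈ B i) := by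
          apply Finset.filter_congr
          intro i _
          exact and_comm
        rw [e1, e2] at h6
        omega
      have h7 := hc y
      have h8 := key y
      omega
  exact hMS (by rw [hsplitA, hsplitB, hMA, hMC])

lemma partition_bound (X D : Submodule K E) (C : Fin (Fintype.card K + 1) → Submodule K E)
    (hDX : D ≤ X)
    (hD : ∀ l, D ≤ C l) (hCX : ∀ l, C l ≤ X) (hne : ∀ l, C l ≠ X)
    (hpair : ∀ l l', l ≠ l' → C l ⊓ C l' ≤ D)
    (hcov : ∀ x ∈ X, ∃ l, x ∈ C l) :
    finrank K X ≤ finrank K D + 2 := by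
  by_contra hcon
  push_neg at hcon
  have hq2 : 2 ≤ Fintype.card K := Fintype.one_lt_card
  have hrklt : ∀ l, finrank K (C l) < finrank K X := fun l =>
    Submodule.finrank_lt_finrank_of_lt (lt_of_le_of_ne (hCX l) (hne l))
  have hrkge : ∀ l, finrank K D ≤ finrank K (C l) := fun l => Submodule.finrank_mono (hD l)
  have hpairrk : ∀ l l', l ≠ l' →
      finrank K (C l) + finrank K (C l') ≤ finrank K X + finrank K D := by
    intro l l' hll
    have h1 := Submodule.finrank_sup_add_finrank_inf_eq (C l) (C l')
    have h2 : finrank K ((C l) ⊔ (C l') : Submodule K E) ≤ finrank K X :=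
      Submodule.finrank_mono (sup_le (hCX l) (hCX l'))
    have h3 : finrank K ((C l) ⊓ (C l') : Submodule K E) ≤ finrank K D :=
      Submodule.finrank_mono (hpair l l' hll)
    omega
  have hDfilter : ∀ (S : Submodule K E), D ≤ S →
      (univ.filter (fun x : E => x ∈ S ∧ x ∉ D)).card + Fintype.card K ^ finrank K D
        = Fintype.card K ^ finrank K S := by
    intro S hDS
    have h1 := Finset.card_filter_add_card_filter_not
      (s := (univ : Finset E).filter (· ∈ S)) (p := fun x => x ∉ D)
    rw [Finset.filter_filter, Finset.filter_filter] at h1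
    have e2 : ((univ : Finset E).filter fun x => x ∈ S ∧ ¬ x ∉ D)
        = (univ.filter (· ∈ D)) := by
      apply Finset.filter_congr
      intro x _
      constructor
      · intro hx
        exact not_not.mp hx.2
      · intro hx
        exact ⟨hDS hx, not_not.mpr hx⟩
    rw [e2, card_filter_mem, card_submodule, card_filter_mem, card_submodule] at h1
    omega
  have hFcard : (univ.filter (fun x : E => x ∈ X ∧ x ∉ D)).card + Fintype.card K ^ finrank K D
      = Fintype.card K ^ finrank K X := hDfilter X hDX
  have hsub : (univ.filter (fun x : E => x ∈ X ∧ x ∉ D)) ⊆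
      univ.biUnion (fun l => (univ.filter (fun x : E => x ∈ X ∧ x ∉ D)).filter (· ∈ C l)) := by
    intro y hy
    have hy' := hy
    simp only [mem_filter, mem_univ, true_and] at hy'
    obtain ⟨l, hl⟩ := hcov y hy'.1
    simp only [Finset.mem_biUnion]
    exact ⟨l, mem_univ l, Finset.mem_filter.mpr ⟨hy, hl⟩⟩
  have hpartcard : ∀ l, ((univ.filter (fun x : E => x ∈ X ∧ x ∉ D)).filter (· ∈ C l)).card
      + Fintype.card K ^ finrank K D ≤ Fintype.card K ^ finrank K (C l) := by
    intro l
    have h1 : (univ.filter (fun x : E => x ∈ X ∧ x ∉ D)).filter (· ∈ C l)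
        ⊆ univ.filter (fun x : E => x ∈ C l ∧ x ∉ D) := by
      intro y hy
      simp only [mem_filter, mem_univ, true_and] at hy ⊢
      exact ⟨hy.2, hy.1.2⟩
    have h2 := Finset.card_le_card h1
    have h3 := hDfilter (C l) (hD l)
    omega
  obtain ⟨l0, _, hl0max⟩ := Finset.exists_max_image
    (univ : Finset (Fin (Fintype.card K + 1))) (fun l => finrank K (C l)) ⟨⟨0, by omega⟩, mem_univ _⟩
  have hotherrk : ∀ l, l ≠ l0 →
      finrank K (C l) ≤ finrank K X + finrank K D - finrank K (C l0) := by
    intro l hl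
    have := hpairrk l l0 hl
    omega
  have hFle : (univ.filter (fun x : E => x ∈ X ∧ x ∉ D)).card
      ≤ ∑ l, ((univ.filter (fun x : E => x ∈ X ∧ x ∉ D)).filter (· ∈ C l)).card :=
    (Finset.card_le_card hsub).trans Finset.card_biUnion_le
  have hsplit : ∑ l, ((univ.filter (fun x : E => x ∈ X ∧ x ∉ D)).filter (· ∈ C l)).card
      = ((univ.filter (fun x : E => x ∈ X ∧ x ∉ D)).filter (· ∈ C l0)).card
        + ∑ l ∈ univ.erase l0,
          ((univ.filter (fun x : E => x ∈ X ∧ x ∉ D)).filter (· ∈ C l)).card :=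
    (Finset.add_sum_erase _ _ (mem_univ l0)).symm
  have hcarderase : (univ.erase l0).card = Fintype.card K := by
    rw [Finset.card_erase_of_mem (mem_univ l0), Finset.card_univ, Fintype.card_fin]
    omega
  have hpd : 1 ≤ Fintype.card K ^ finrank K D := Nat.one_le_pow _ _ (by omega)
  by_cases hMcase : finrank K (C l0) ≤ finrank K D + 1
  · have hbound : ∀ l ∈ (univ : Finset (Fin (Fintype.card K + 1))),
        ((univ.filter (fun x : E => x ∈ X ∧ x ∉ D)).filter (· ∈ C l)).card
          + Fintype.card K ^ finrank K D
        ≤ Fintype.card K ^ finrank K D * Fintype.card K := by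
      intro l _
      have h1 := hpartcard l
      have h2 : Fintype.card K ^ finrank K (C l)
          ≤ Fintype.card K ^ (finrank K D + 1) :=
        Nat.pow_le_pow_right (by omega) (le_trans (hl0max l (mem_univ l)) hMcase)
      rw [pow_succ] at h2
      omega
    have hsum := Finset.sum_le_sum hbound
    rw [Finset.sum_add_distrib, Finset.sum_const, Finset.sum_const, Finset.card_univ,
      Fintype.card_fin, smul_eq_mul, smul_eq_mul] at hsum
    have e3 : (Fintype.card K + 1) * Fintype.card K ^ finrank K D
        = Fintype.card K ^ finrank K D * Fintype.card K
          + Fintype.card K ^ finrank K D := by ring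
    have e4 : (Fintype.card K + 1) * (Fintype.card K ^ finrank K D * Fintype.card K)
        = Fintype.card K ^ finrank K D * Fintype.card K * Fintype.card K
          + Fintype.card K ^ finrank K D * Fintype.card K := by ring
    rw [e3, e4] at hsum
    have hstep3 : Fintype.card K ^ (finrank K D + 3) ≤ Fintype.card K ^ finrank K X :=
      Nat.pow_le_pow_right (by omega) (by omega)
    have hstep2 : Fintype.card K ^ (finrank K D + 3)
        = Fintype.card K ^ finrank K D * Fintype.card K * Fintype.card K * Fintype.card K := by
      rw [pow_succ, pow_succ, pow_succ]
    have htwo : Fintype.card K ^ finrank K D * Fintype.card K * Fintype.card K * 2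
        ≤ Fintype.card K ^ finrank K D * Fintype.card K * Fintype.card K * Fintype.card K :=
      Nat.mul_le_mul_left _ (by omega)
    have hcqq : 1 ≤ Fintype.card K ^ finrank K D * Fintype.card K * Fintype.card K := by
      have := Nat.mul_pos (Nat.mul_pos (Nat.lt_of_lt_of_le Nat.zero_lt_one hpd)
        (show 0 < Fintype.card K by omega)) (show 0 < Fintype.card K by omega)
      omega
    omega
  · push_neg at hMcase
    have hpart0 : ((univ.filter (fun x : E => x ∈ X ∧ x ∉ D)).filter (· ∈ C l0)).card
        + Fintype.card K ^ finrank K D ≤ Fintype.card K ^ (finrank K X - 1) := by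
      have h1 := hpartcard l0
      have h2 : Fintype.card K ^ finrank K (C l0) ≤ Fintype.card K ^ (finrank K X - 1) :=
        Nat.pow_le_pow_right (by omega) (by
          have := hrklt l0
          omega)
      omega
    have hsumo : ∑ l ∈ univ.erase l0,
        ((univ.filter (fun x : E => x ∈ X ∧ x ∉ D)).filter (· ∈ C l)).card
        ≤ Fintype.card K *
          (Fintype.card K ^ (finrank K X - 2) - Fintype.card K ^ finrank K D) := by
      calc ∑ l ∈ univ.erase l0,
          ((univ.filter (fun x : E => x ∈ X ∧ x ∉ D)).filter (· ∈ C l)).card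
          ≤ (univ.erase l0).card *
            (Fintype.card K ^ (finrank K X - 2) - Fintype.card K ^ finrank K D) := by
            apply Finset.sum_le_card_nsmul
            intro l hl
            have hlne : l ≠ l0 := (Finset.mem_erase.mp hl).1
            have h1 := hpartcard l
            have h2 : Fintype.card K ^ finrank K (C l)
                ≤ Fintype.card K ^ (finrank K X - 2) := by
              apply Nat.pow_le_pow_right (by omega)
              have h3 := hotherrk l hlne
              omega
            omega
        _ = _ := by rw [hcarderase]
    have he2 : Fintype.card K ^ finrank K X
        = Fintype.card K ^ (finrank K X - 2) * Fintype.card K * Fintype.card K := by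
      rw [← pow_succ, ← pow_succ]
      congr 1
      omega
    have he1 : Fintype.card K ^ (finrank K X - 1)
        = Fintype.card K ^ (finrank K X - 2) * Fintype.card K := by
      rw [← pow_succ]
      congr 1
      omega
    have hpDd : Fintype.card K ^ finrank K D ≤ Fintype.card K ^ (finrank K X - 2) :=
      Nat.pow_le_pow_right (by omega) (by omega)
    have hmul2 : Fintype.card K *
        (Fintype.card K ^ (finrank K X - 2) - Fintype.card K ^ finrank K D)
        = Fintype.card K ^ (finrank K X - 2) * Fintype.card K
          - Fintype.card K ^ finrank K D * Fintype.card K := by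
      rw [Nat.mul_sub]
      ring_nf
    have hq1 : Fintype.card K ≤ Fintype.card K ^ finrank K D * Fintype.card K :=
      Nat.le_mul_of_pos_left _ (by omega)
    have h2q : Fintype.card K ^ (finrank K X - 2) * Fintype.card K
          + Fintype.card K ^ (finrank K X - 2) * Fintype.card K
        ≤ Fintype.card K ^ (finrank K X - 2) * Fintype.card K * Fintype.card K := by
      have h13 : Fintype.card K ^ (finrank K X - 2) * Fintype.card K
            + Fintype.card K ^ (finrank K X - 2) * Fintype.card K
          = Fintype.card K ^ (finrank K X - 2) * Fintype.card K * 2 := by ring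
      have h14 : Fintype.card K ^ (finrank K X - 2) * Fintype.card K * 2
          ≤ Fintype.card K ^ (finrank K X - 2) * Fintype.card K * Fintype.card K :=
        Nat.mul_le_mul_left _ (by omega)
      omega
    have hdqq : Fintype.card K ^ finrank K D * Fintype.card K
        ≤ Fintype.card K ^ (finrank K X - 2) * Fintype.card K :=
      Nat.mul_le_mul_right _ hpDd
    omega

variable {A B : Fin (Fintype.card K + 1) → Submodule K E}

/-- Every member of either tuple contains any pairwise intersection. -/
lemma inter_le
    (hc : ∀ x : E, (univ.filter fun i => x ∈ A i).card = (univ.filter fun i => x ∈ B i).card)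
    (hMS : Multiset.map A univ.val ≠ Multiset.map B univ.val)
    {i j : Fin (Fintype.card K + 1)} (hij : i ≠ j) (k : Fin (Fintype.card K + 1)) :
    A i ⊓ A j ≤ A k ∧ A i ⊓ A j ≤ B k := by
  have h2x : ∀ x : E, x ∈ (A i ⊓ A j : Submodule K E) → (∀ k', x ∈ A k') ∧ (∀ k', x ∈ B k') := by
    intro x hx
    have h2 : 2 ≤ (univ.filter fun i' => x ∈ A i').card := by
      have hsub : ({i, j} : Finset (Fin (Fintype.card K + 1)))
          ⊆ univ.filter fun i' => x ∈ A i' := by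
        intro l hl
        rcases Finset.mem_insert.mp hl with rfl | hl
        · exact Finset.mem_filter.mpr ⟨mem_univ _, hx.1⟩
        · rw [Finset.mem_singleton.mp hl]
          exact Finset.mem_filter.mpr ⟨mem_univ _, hx.2⟩
      calc 2 = ({i, j} : Finset (Fin (Fintype.card K + 1))).card := (Finset.card_pair hij).symm
        _ ≤ _ := Finset.card_le_card hsub
    have hP := count_not_middle hc hMS x h2
    constructor <;> intro k'
    · have hk' : k' ∈ univ.filter fun i' => x ∈ A i' := by
        rw [hP.1]
        exact mem_univ k'
      exact (Finset.mem_filter.mp hk').2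
    · have hk' : k' ∈ univ.filter fun i' => x ∈ B i' := by
        rw [hP.2]
        exact mem_univ k'
      exact (Finset.mem_filter.mp hk').2
  exact ⟨fun x hx => (h2x x hx).1 k, fun x hx => (h2x x hx).2 k⟩

/-- In a nontrivial solution some `A k` is small. -/
lemma exists_small
    (hc : ∀ x : E, (univ.filter fun i => x ∈ A i).card = (univ.filter fun i => x ∈ B i).card)
    (hMS : Multiset.map A univ.val ≠ Multiset.map B univ.val)
    {i j : Fin (Fintype.card K + 1)} (hij : i ≠ j) :
    ∃ k, finrank K (A k) ≤ finrank K (A i ⊓ A j : Submodule K E) + 2 := by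
  by_contra hcon
  push_neg at hcon
  have hq2 : 2 ≤ Fintype.card K := Fintype.one_lt_card
  have hDA : ∀ k, (A i ⊓ A j : Submodule K E) ≤ A k := fun k => (inter_le hc hMS hij k).1
  have hDB : ∀ k, (A i ⊓ A j : Submodule K E) ≤ B k := fun k => (inter_le hc hMS hij k).2
  have hmid : ∀ x : E, 2 ≤ (univ.filter fun i' => x ∈ A i').card → x ∈ (A i ⊓ A j : Submodule K E) := by
    intro x hx
    have hP := count_not_middle hc hMS x hx
    constructor
    · have hk' : i ∈ univ.filter fun i' => x ∈ A i' := by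
        rw [hP.1]
        exact mem_univ i
      exact (Finset.mem_filter.mp hk').2
    · have hk' : j ∈ univ.filter fun i' => x ∈ A i' := by
        rw [hP.1]
        exact mem_univ j
      exact (Finset.mem_filter.mp hk').2
  have hmidB : ∀ x : E, 2 ≤ (univ.filter fun i' => x ∈ B i').card → x ∈ (A i ⊓ A j : Submodule K E) := by
    intro x hx
    rw [← hc x] at hx
    exact hmid x hx
  have hApair : ∀ k k', k ≠ k' → A k ⊓ A k' ≤ (A i ⊓ A j : Submodule K E) := by
    intro k k' hkk x hx
    apply hmid
    have hsub : ({k, k'} : Finset (Fin (Fintype.card K + 1)))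
        ⊆ univ.filter fun i' => x ∈ A i' := by
      intro l hl
      rcases Finset.mem_insert.mp hl with rfl | hl
      · exact Finset.mem_filter.mpr ⟨mem_univ _, hx.1⟩
      · rw [Finset.mem_singleton.mp hl]
        exact Finset.mem_filter.mpr ⟨mem_univ _, hx.2⟩
    calc 2 = ({k, k'} : Finset (Fin (Fintype.card K + 1))).card := (Finset.card_pair hkk).symm
      _ ≤ _ := Finset.card_le_card hsub
  have hBpair : ∀ l l', l ≠ l' → B l ⊓ B l' ≤ (A i ⊓ A j : Submodule K E) := by
    intro l l' hll x hx
    apply hmidB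
    have hsub : ({l, l'} : Finset (Fin (Fintype.card K + 1)))
        ⊆ univ.filter fun i' => x ∈ B i' := by
      intro l1 hl1
      rcases Finset.mem_insert.mp hl1 with rfl | hl1
      · exact Finset.mem_filter.mpr ⟨mem_univ _, hx.1⟩
      · rw [Finset.mem_singleton.mp hl1]
        exact Finset.mem_filter.mpr ⟨mem_univ _, hx.2⟩
    calc 2 = ({l, l'} : Finset (Fin (Fintype.card K + 1))).card := (Finset.card_pair hll).symm
      _ ≤ _ := Finset.card_le_card hsub
  -- every x in some A is in some B and vice versa
  have hcovB : ∀ x : E, x ∈ A i → ∃ l, x ∈ B l := by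
    intro x hx
    have h1 : 0 < (univ.filter fun i' => x ∈ A i').card :=
      Finset.card_pos.mpr ⟨i, Finset.mem_filter.mpr ⟨mem_univ _, hx⟩⟩
    rw [hc x] at h1
    obtain ⟨l, hl⟩ := Finset.card_pos.mp h1
    exact ⟨l, (Finset.mem_filter.mp hl).2⟩
  -- step 1: A i is contained in some B l0
  have hstep1 : ∃ l0, A i ≤ B l0 := by
    by_contra hno
    push_neg at hno
    have hb := partition_bound (A i) (A i ⊓ A j) (fun l => A i ⊓ B l)
      inf_le_left
      (fun l => le_inf inf_le_left (hDB l))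
      (fun l => inf_le_left)
      (fun l hl => hno l (by rw [← hl]; exact inf_le_right))
      (fun l l' hll => le_trans (inf_le_inf inf_le_right inf_le_right) (hBpair l l' hll))
      (fun x hx => by
        obtain ⟨l, hl⟩ := hcovB x hx
        exact ⟨l, hx, hl⟩)
    exact absurd hb (by have := hcon i; omega)
  obtain ⟨l0, hl0⟩ := hstep1
  have hrkB : finrank K (A i ⊓ A j : Submodule K E) + 2 < finrank K (B l0) := by
    have h1 : finrank K (A i) ≤ finrank K (B l0) := Submodule.finrank_mono hl0
    have := hcon i
    omega
  have hcovA : ∀ x : E, x ∈ B l0 → ∃ k, x ∈ A k := by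
    intro x hx
    have h1 : 0 < (univ.filter fun i' => x ∈ B i').card :=
      Finset.card_pos.mpr ⟨l0, Finset.mem_filter.mpr ⟨mem_univ _, hx⟩⟩
    rw [← hc x] at h1
    obtain ⟨k, hk⟩ := Finset.card_pos.mp h1
    exact ⟨k, (Finset.mem_filter.mp hk).2⟩
  have hstep2 : ∃ k1, B l0 ≤ A k1 := by
    by_contra hno
    push_neg at hno
    have hb := partition_bound (B l0) (A i ⊓ A j) (fun k => B l0 ⊓ A k)
      (hDB l0)
      (fun k => le_inf (hDB l0) (hDA k))
      (fun k => inf_le_left)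
      (fun k hk => hno k (by rw [← hk]; exact inf_le_right))
      (fun k k' hkk => le_trans (inf_le_inf inf_le_right inf_le_right) (hApair k k' hkk))
      (fun x hx => by
        obtain ⟨k, hk⟩ := hcovA x hx
        exact ⟨k, hx, hk⟩)
    omega
  obtain ⟨k1, hk1⟩ := hstep2
  have hk1i : k1 = i := by
    by_contra hne
    have h1 : A i ≤ A i ⊓ A k1 := le_inf le_rfl (le_trans hl0 hk1)
    have h2 : A i ≤ (A i ⊓ A j : Submodule K E) := le_trans h1 (hApair i k1 (fun h => hne h.symm))
    have h3 : finrank K (A i) ≤ finrank K (A i ⊓ A j : Submodule K E) :=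
      Submodule.finrank_mono h2
    have := hcon i
    omega
  have hAB : A i = B l0 := le_antisymm hl0 (hk1i ▸ hk1)
  -- cancellation
  have hiu : i ∈ (univ : Finset (Fin (Fintype.card K + 1))).val := mem_univ_val _
  have hlu : l0 ∈ (univ : Finset (Fin (Fintype.card K + 1))).val := mem_univ_val _
  have hconsA : A i ::ₘ Multiset.map A (univ.val.erase i) = Multiset.map A univ.val := by
    rw [← Multiset.map_cons, Multiset.cons_erase hiu]
  have hconsB : B l0 ::ₘ Multiset.map B (univ.val.erase l0) = Multiset.map B univ.val := by
    rw [← Multiset.map_cons, Multiset.cons_erase hlu]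
  have hcounts : ∀ y : E, (Multiset.map A (univ.val.erase i)).countP (y ∈ ·)
      = (Multiset.map B (univ.val.erase l0)).countP (y ∈ ·) := by
    intro y
    have h1 : (Multiset.map A univ.val).countP (y ∈ ·)
        = (Multiset.map B univ.val).countP (y ∈ ·) := by
      rw [countP_map_finset, countP_map_finset]
      exact hc y
    rw [← hconsA, ← hconsB, Multiset.countP_cons, Multiset.countP_cons] at h1
    have h2 : (y ∈ A i) ↔ (y ∈ B l0) := by rw [hAB]
    by_cases hy : y ∈ A i
    · rw [if_pos hy, if_pos (h2.mp hy)] at h1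
      omega
    · rw [if_neg hy, if_neg (fun hy' => hy (h2.mpr hy'))] at h1
      omega
  have herase : Multiset.map A (univ.val.erase i) = Multiset.map B (univ.val.erase l0) := by
    apply short_trivial (Multiset.card (Multiset.map A (univ.val.erase i))) _ _ rfl _ hcounts
    have hcu : Multiset.card (univ : Finset (Fin (Fintype.card K + 1))).val
        = Fintype.card K + 1 := by
      rw [← Finset.card_def, Finset.card_univ, Fintype.card_fin]
    rw [Multiset.card_map, Multiset.card_erase_of_mem hiu, hcu, Nat.pred_eq_sub_one]
    omega
  apply hMS
  rw [← hconsA, ← hconsB, herase, hAB]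

end Main

section Bridge
variable {K W : Type*} [Field K] [Fintype K] [AddCommGroup W] [Module K W]
  [FiniteDimensional K W] [Fintype W]

/-- Summing the normalized indicator of `S` over the kernel of `φ`. -/
lemma sum_indicator_ker (S : Submodule K W) (φ : Module.Dual K W) :
    ∑ w : W, (if φ w = 0 then (1:ℝ) else 0) * (((Nat.card ↥S : ℝ))⁻¹ * (if w ∈ S then 1 else 0))
    = if S ≤ LinearMap.ker φ then (1:ℝ) else (Fintype.card K : ℝ)⁻¹ := by
  have hq2 : 2 ≤ Fintype.card K := Fintype.one_lt_card
  have hcount : ∑ w : W, (if φ w = 0 then (1:ℝ) else 0) * (if w ∈ S then 1 else 0)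
      = (Nat.card ↥(S ⊓ LinearMap.ker φ : Submodule K W) : ℝ) := by
    rw [← card_filter_mem]
    rw [Finset.card_filter]
    push_cast
    apply Finset.sum_congr rfl
    intro w _
    by_cases h1 : φ w = 0 <;> by_cases h2 : w ∈ S <;>
      simp [h1, h2, Submodule.mem_inf, LinearMap.mem_ker]
  have hfactor : ∑ w : W, (if φ w = 0 then (1:ℝ) else 0)
        * (((Nat.card ↥S : ℝ))⁻¹ * (if w ∈ S then 1 else 0))
      = ((Nat.card ↥S : ℝ))⁻¹
        * (Nat.card ↥(S ⊓ LinearMap.ker φ : Submodule K W) : ℝ) := by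
    rw [← hcount, Finset.mul_sum]
    apply Finset.sum_congr rfl
    intro w _
    ring
  rw [hfactor]
  by_cases hle : S ≤ LinearMap.ker φ
  · rw [if_pos hle]
    have h1 : S ⊓ LinearMap.ker φ = S := inf_eq_left.mpr hle
    rw [h1]
    have h2 : (0:ℝ) < (Nat.card ↥S : ℝ) := by
      have : 0 < Nat.card ↥S := Nat.card_pos
      exact_mod_cast this
    field_simp
  · rw [if_neg hle]
    -- φ restricted facts
    have hφ0 : φ ≠ 0 := by
      intro h
      apply hle
      intro s _
      simp [h]
    have hrange : LinearMap.range φ = ⊤ := by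
      rcases Ideal.eq_bot_or_top (LinearMap.range φ : Ideal K) with h | h
      · exfalso
        apply hφ0
        apply LinearMap.ext
        intro w
        have : φ w ∈ LinearMap.range φ := LinearMap.mem_range_self φ w
        rw [h] at this
        rw [LinearMap.zero_apply]
        exact (Submodule.mem_bot K).mp this
      · exact h
    have hker : finrank K (LinearMap.ker φ) + 1 = finrank K W := by
      have h1 := LinearMap.finrank_range_add_finrank_ker φ
      rw [hrange] at h1
      rw [finrank_top] at h1
      rw [finrank_self] at h1
      omega
    have hsup : S ⊔ LinearMap.ker φ = ⊤ := by
      have h1 : LinearMap.ker φ < S ⊔ LinearMap.ker φ := by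
        refine lt_of_le_of_ne le_sup_right ?_
        intro h
        apply hle
        have h2 : S ≤ S ⊔ LinearMap.ker φ := le_sup_left
        rwa [← h] at h2
      have h2 : finrank K W - 1 < finrank K (S ⊔ LinearMap.ker φ : Submodule K W) := by
        have := Submodule.finrank_lt_finrank_of_lt h1
        omega
      apply Submodule.eq_top_of_finrank_eq
      have h3 : finrank K (S ⊔ LinearMap.ker φ : Submodule K W) ≤ finrank K W :=
        Submodule.finrank_le _
      omega
    have hinf : finrank K (S ⊓ LinearMap.ker φ : Submodule K W) + 1 = finrank K S := by
      have h1 := Submodule.finrank_sup_add_finrank_inf_eq S (LinearMap.ker φ)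
      rw [hsup, finrank_top] at h1
      omega
    rw [card_submodule, card_submodule, hinf.symm]
    have hq0 : (0:ℝ) < (Fintype.card K : ℝ) := by positivity
    rw [pow_succ]
    push_cast
    rw [mul_inv]
    have hp0 : (0:ℝ) < (Fintype.card K : ℝ) ^ finrank K (S ⊓ LinearMap.ker φ : Submodule K W) := by
      positivity
    field_simp

lemma dual_count {m : ℕ} (U V : Fin m → Submodule K W) (hsol : IsometrySolution U V)
    (φ : Module.Dual K W) :
    (univ.filter fun i => (V i) ≤ LinearMap.ker φ).card
      = (univ.filter fun i => (U i) ≤ LinearMap.ker φ).card := by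
  have hq2 : 2 ≤ Fintype.card K := Fintype.one_lt_card
  have hside : ∀ (C : Fin m → Submodule K W),
      ∑ i, (if C i ≤ LinearMap.ker φ then (1:ℝ) else (Fintype.card K:ℝ)⁻¹)
      = ∑ w : W, (if φ w = 0 then (1:ℝ) else 0)
          * (∑ i, ((Nat.card ↥(C i) : ℝ))⁻¹ * (if w ∈ C i then 1 else 0)) := by
    intro C
    calc ∑ i, (if C i ≤ LinearMap.ker φ then (1:ℝ) else (Fintype.card K:ℝ)⁻¹)
        = ∑ i, ∑ w : W, (if φ w = 0 then (1:ℝ) else 0)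
            * (((Nat.card ↥(C i) : ℝ))⁻¹ * (if w ∈ C i then 1 else 0)) :=
          Finset.sum_congr rfl (fun i _ => (sum_indicator_ker (C i) φ).symm)
      _ = ∑ w : W, ∑ i, (if φ w = 0 then (1:ℝ) else 0)
            * (((Nat.card ↥(C i) : ℝ))⁻¹ * (if w ∈ C i then 1 else 0)) := Finset.sum_comm
      _ = _ := Finset.sum_congr rfl (fun w _ => (Finset.mul_sum _ _ _).symm)
  have heq : ∑ i, (if V i ≤ LinearMap.ker φ then (1:ℝ) else (Fintype.card K:ℝ)⁻¹)
      = ∑ i, (if U i ≤ LinearMap.ker φ then (1:ℝ) else (Fintype.card K:ℝ)⁻¹) := by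
    rw [hside V, hside U]
    exact Finset.sum_congr rfl (fun w _ => by rw [hsol w])
  have hconv : ∀ (C : Fin m → Submodule K W),
      ∑ i, (if C i ≤ LinearMap.ker φ then (1:ℝ) else (Fintype.card K:ℝ)⁻¹)
      = ((univ.filter fun i => C i ≤ LinearMap.ker φ).card : ℝ)
        + ((univ.filter fun i => ¬ C i ≤ LinearMap.ker φ).card : ℝ) * (Fintype.card K:ℝ)⁻¹ := by
    intro C
    rw [Finset.sum_ite, Finset.sum_const, Finset.sum_const]
    simp [nsmul_eq_mul]
  rw [hconv V, hconv U] at heq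
  have hcV := Finset.card_filter_add_card_filter_not
    (s := (univ : Finset (Fin m))) (p := fun i => V i ≤ LinearMap.ker φ)
  have hcU := Finset.card_filter_add_card_filter_not
    (s := (univ : Finset (Fin m))) (p := fun i => U i ≤ LinearMap.ker φ)
  rw [Finset.card_univ, Fintype.card_fin] at hcV hcU
  -- real arithmetic
  set t : ℝ := (Fintype.card K:ℝ)⁻¹ with ht
  have ht1 : t < 1 := by
    rw [ht]
    rw [inv_lt_one_iff₀]
    right
    exact_mod_cast by omega
  have ht0 : 0 < t := by
    rw [ht]
    apply inv_pos.mpr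
    exact_mod_cast by omega
  have hsumcast : ((univ.filter fun i => V i ≤ LinearMap.ker φ).card : ℝ)
        + ((univ.filter fun i => ¬ V i ≤ LinearMap.ker φ).card : ℝ)
      = ((univ.filter fun i => U i ≤ LinearMap.ker φ).card : ℝ)
        + ((univ.filter fun i => ¬ U i ≤ LinearMap.ker φ).card : ℝ) := by
    push_cast
    exact_mod_cast by omega
  have hcancel : ((univ.filter fun i => V i ≤ LinearMap.ker φ).card : ℝ) * (1 - t)
      = ((univ.filter fun i => U i ≤ LinearMap.ker φ).card : ℝ) * (1 - t) := by
    linear_combination heq - t * hsumcast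
  have h1t : (1:ℝ) - t ≠ 0 := by
    intro h
    linarith
  exact_mod_cast mul_right_cancel₀ h1t hcancel
end Bridge

section Bridge2
variable {K W : Type*} [Field K] [Fintype K] [AddCommGroup W] [Module K W]
  [FiniteDimensional K W]

lemma finrank_ann (S : Submodule K W) :
    finrank K S.dualAnnihilator + finrank K S = finrank K W := by
  have h1 : finrank K (W ⧸ S) = finrank K S.dualAnnihilator :=
    LinearEquiv.finrank_eq (Subspace.quotEquivAnnihilator S)
  have h2 := Submodule.finrank_quotient_add_finrank S
  omega



end Bridge2

/-- In a nontrivial minimal solution, for any `i ≠ j` every space of both tuples is contained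
in `V i + V j`, and `dim (V i + V j) ≤ 2 + max_k dim (V k)`. -/
theorem nontrivial_solution_sum_of_two_spaces
    (K W : Type*) [Field K] [Fintype K] [AddCommGroup W] [Module K W]
    [FiniteDimensional K W]
    (U V : Fin (Fintype.card K + 1) → Submodule K W)
    (hsol : IsometrySolution U V) (hnontriv : ¬ TuplesEquiv U V) :
    ∀ i j, i ≠ j →
      (∀ k, V k ≤ V i ⊔ V j ∧ U k ≤ V i ⊔ V j) ∧
      Module.finrank K ↥(V i ⊔ V j) ≤
        2 + Finset.univ.sup (fun k => Module.finrank K ↥(V k)) := by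
  intro i j hij
  haveI : Finite W := Module.finite_of_finite K
  haveI : Finite (Module.Dual K W) := Module.finite_of_finite K
  letI : Fintype W := Fintype.ofFinite W
  letI : Fintype (Module.Dual K W) := Fintype.ofFinite _
  set A : Fin (Fintype.card K + 1) → Submodule K (Module.Dual K W) :=
    fun k => (V k).dualAnnihilator with hA
  set B : Fin (Fintype.card K + 1) → Submodule K (Module.Dual K W) :=
    fun k => (U k).dualAnnihilator with hB
  have hmem : ∀ (S : Submodule K W) (φ : Module.Dual K W),
      (φ ∈ S.dualAnnihilator) ↔ S ≤ LinearMap.ker φ := by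
    intro S φ
    rw [Submodule.mem_dualAnnihilator]
    constructor
    · intro h w hw
      rw [LinearMap.mem_ker]
      exact h w hw
    · intro h w hw
      exact h hw
  have hc : ∀ φ : Module.Dual K W,
      (univ.filter fun k => φ ∈ A k).card = (univ.filter fun k => φ ∈ B k).card := by
    intro φ
    have h1 := dual_count U V hsol φ
    have e1 : (univ.filter fun k => φ ∈ A k) = (univ.filter fun k => (V k) ≤ LinearMap.ker φ) :=
      Finset.filter_congr (fun k _ => by rw [hA]; exact hmem (V k) φ)
    have e2 : (univ.filter fun k => φ ∈ B k) = (univ.filter fun k => (U k) ≤ LinearMap.ker φ) :=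
      Finset.filter_congr (fun k _ => by rw [hB]; exact hmem (U k) φ)
    rw [e1, e2, h1]
  have hMS : Multiset.map A univ.val ≠ Multiset.map B univ.val := by
    intro h
    apply hnontriv
    obtain ⟨π, hπ⟩ := exists_perm_of_multiset_eq h
    exact ⟨π, fun k => Subspace.dualAnnihilator_inj.mp (hπ k)⟩
  have hsupann : (V i ⊔ V j).dualAnnihilator = A i ⊓ A j :=
    Submodule.dualAnnihilator_sup_eq (V i) (V j)
  constructor
  · intro k
    have h1 := inter_le hc hMS hij k
    constructor
    · apply Subspace.dualAnnihilator_le_dualAnnihilator_iff.mp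
      rw [hsupann]
      exact h1.1
    · apply Subspace.dualAnnihilator_le_dualAnnihilator_iff.mp
      rw [hsupann]
      exact h1.2
  · obtain ⟨k, hk⟩ := exists_small hc hMS hij
    rw [← hsupann] at hk
    have e1 := finrank_ann (K := K) (V i ⊔ V j)
    have e2 := finrank_ann (K := K) (V k)
    have e3 : finrank K (V k) ≤ univ.sup (fun k => finrank K (V k)) :=
      Finset.le_sup (f := fun k => finrank K (V k)) (mem_univ k)
    have hAk : finrank K (A k) + finrank K (V k) = finrank K W := e2
    omega
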